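/- (Grouping corollary) Under the hypotheses of the grouping effect bound, if additionally rᵢ = rⱼ ≠ 0, then |θ̂ᵢ − θ̂ⱼ|/Z ≤ √(2(1−ρ))·‖y‖₂/(rᵢ²·nλ). -/

import Mathlib

noncomputable def eye {d : ℕ} (r θ : Fin d → ℝ) : ℝ :=
  (∑ i, (1 - r i) * |θ i|) +
    Real.sqrt ((∑ i, (1 - r i) * |θ i|) ^ 2 + ∑ i, (r i * θ i) ^ 2)

set_option maxHeartbeats 1000000 in
theorem eye_grouping_corollary {n d : ℕ}
    (X : Fin n → Fin d → ℝ) (y : Fin n → ℝ) (r : Fin d → ℝ)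
    (nl : ℝ) (hnl : 0 < nl)
    (i j : Fin d) (hij : i ≠ j)
    (θhat : Fin d → ℝ)
    (hmin : ∀ θ : Fin d → ℝ,
      (1 / 2) * (∑ k, (y k - ∑ l, X k l * θhat l) ^ 2) + nl * eye r θhat ≤
      (1 / 2) * (∑ k, (y k - ∑ l, X k l * θ l) ^ 2) + nl * eye r θ)
    (hsign : 0 < θhat i * θhat j)
    (ρ : ℝ) (hstd : ∑ k, (X k i - X k j) ^ 2 = 2 * (1 - ρ))
    (Z : ℝ)
    (hZ : Z = Real.sqrt ((∑ l, (1 - r l) * |θhat l|) ^ 2 + ∑ l, (r l * θhat l) ^ 2))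
    (hZpos : 0 < Z)
    (hrij : r i = r j) (hrne : r i ≠ 0) :
    |θhat i - θhat j| / Z ≤
      Real.sqrt (2 * (1 - ρ)) * Real.sqrt (∑ k, (y k) ^ 2) / (r i ^ 2 * nl) := by
  classical
  set A := ∑ l, (1 - r l) * |θhat l| with hA
  set Q := ∑ l, (r l * θhat l) ^ 2 with hQdef
  have hQnn : 0 ≤ Q := Finset.sum_nonneg fun _ _ => sq_nonneg _
  have hθi : θhat i ≠ 0 := by
    intro h; rw [h] at hsign; simp at hsign
  have hθj : θhat j ≠ 0 := by
    intro h; rw [h] at hsign; simp at hsign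
  set ε := min |θhat i| |θhat j| with hε
  have hεpos : 0 < ε := lt_min (abs_pos.2 hθi) (abs_pos.2 hθj)
  set res : Fin n → ℝ := fun k => y k - ∑ l, X k l * θhat l with hres
  set w : Fin n → ℝ := fun k => X k i - X k j with hw
  set θt : ℝ → Fin d → ℝ :=
    fun t l => if l = i then θhat i - t else if l = j then θhat j + t else θhat l with hθt
  -- generic sum decomposition
  have hsum : ∀ (t : ℝ) (F : Fin d → ℝ → ℝ),
      ∑ l, F l (θt t l) = (∑ l, F l (θhat l))
        + (F i (θhat i - t) - F i (θhat i)) + (F j (θhat j + t) - F j (θhat j)) := by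
    intro t F
    have h1 : ∀ l, F l (θt t l) = F l (θhat l)
        + ((if i = l then F i (θhat i - t) - F i (θhat i) else 0)
        + (if j = l then F j (θhat j + t) - F j (θhat j) else 0)) := by
      intro l
      by_cases hli : l = i
      · subst hli
        simp [θt, (Ne.symm hij : j ≠ l)]
      · by_cases hlj : l = j
        · subst hlj
          simp [θt, hij, (Ne.symm hij : l ≠ i)]
        · have h1 : ¬ i = l := fun h => hli h.symm
          have h2 : ¬ j = l := fun h => hlj h.symm
          simp [θt, hli, hlj, h1, h2]
    rw [Finset.sum_congr rfl (fun l _ => h1 l)]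
    rw [Finset.sum_add_distrib, Finset.sum_add_distrib, Finset.sum_ite_eq, Finset.sum_ite_eq]
    simp
    ring
  -- residual along the path
  have hres_t : ∀ (t : ℝ) (k : Fin n),
      y k - ∑ l, X k l * θt t l = res k + t * w k := by
    intro t k
    rw [hsum t (fun l x => X k l * x)]
    simp only [hres, hw]
    ring
  -- ℓ1 part constant along the path
  have hAt : ∀ t : ℝ, |t| < ε → ∑ l, (1 - r l) * |θt t l| = A := by
    intro t ht
    rw [hsum t (fun l x => (1 - r l) * |x|)]
    have hti : |t| < |θhat i| := lt_of_lt_of_le ht (min_le_left _ _)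
    have htj : |t| < |θhat j| := lt_of_lt_of_le ht (min_le_right _ _)
    rcases lt_or_gt_of_ne hθi with hi0 | hi0
    · -- θhat i < 0, hence θhat j < 0
      have hj0 : θhat j < 0 := by nlinarith
      have h1 : |θhat i - t| = -(θhat i - t) := abs_of_neg (by
        rw [abs_of_neg hi0] at hti
        cases abs_lt.1 hti with | intro h1 h2 => linarith)
      have h2 : |θhat j + t| = -(θhat j + t) := abs_of_neg (by
        rw [abs_of_neg hj0] at htj
        cases abs_lt.1 htj with | intro h1 h2 => linarith)
      rw [h1, h2, abs_of_neg hi0, abs_of_neg hj0, hrij]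
      ring
    · have hj0 : 0 < θhat j := by nlinarith
      have h1 : |θhat i - t| = θhat i - t := abs_of_pos (by
        rw [abs_of_pos hi0] at hti
        cases abs_lt.1 hti with | intro h1 h2 => linarith)
      have h2 : |θhat j + t| = θhat j + t := abs_of_pos (by
        rw [abs_of_pos hj0] at htj
        cases abs_lt.1 htj with | intro h1 h2 => linarith)
      rw [h1, h2, abs_of_pos hi0, abs_of_pos hj0, hrij]
      ring
  -- quadratic part along the path
  set q : ℝ → ℝ := fun t => Q + (r i) ^ 2 * ((θhat i - t) ^ 2 - (θhat i) ^ 2)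
      + (r i) ^ 2 * ((θhat j + t) ^ 2 - (θhat j) ^ 2) with hq
  have hQt : ∀ t : ℝ, ∑ l, (r l * θt t l) ^ 2 = q t := by
    intro t
    rw [hsum t (fun l x => (r l * x) ^ 2)]
    simp only [hq, ← hrij]
    ring
  have hq0 : q 0 = Q := by simp [hq]
  -- objective along the path
  set g : ℝ → ℝ := fun t =>
    (1 / 2) * (∑ k, (y k - ∑ l, X k l * θt t l) ^ 2) + nl * eye r (θt t) with hg
  set h : ℝ → ℝ := fun t =>
    (1 / 2) * (∑ k, (res k + t * w k) ^ 2) + nl * (A + Real.sqrt (A ^ 2 + q t)) with hh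
  have hgh : ∀ t : ℝ, |t| < ε → g t = h t := by
    intro t ht
    simp only [hg, hh, eye]
    have hsum2 : ∑ k, (y k - ∑ l, X k l * θt t l) ^ 2 = ∑ k, (res k + t * w k) ^ 2 :=
      Finset.sum_congr rfl fun k _ => by rw [hres_t t k]
    rw [hAt t ht, hQt t, hsum2]
  -- g has a global minimum at 0
  have hθt0 : θt 0 = θhat := by
    funext l
    simp only [θt]
    split_ifs with h1 h2
    · simp [h1]
    · simp [h2]
    · rfl
  have hlocal : IsLocalMin g 0 := by
    apply Filter.Eventually.of_forall
    intro t
    have := hmin (θt t)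
    simpa only [hg, hθt0] using this
  -- derivative of h at 0
  have hZsq : A ^ 2 + Q = Z ^ 2 := by
    rw [hZ, Real.sq_sqrt (by positivity)]
  have hAQpos : 0 < A ^ 2 + q 0 := by rw [hq0, hZsq]; positivity
  have hpart1 : HasDerivAt (fun t : ℝ => (1 / 2) * ∑ k, (res k + t * w k) ^ 2)
      (∑ k, res k * w k) 0 := by
    have h1 : ∀ k : Fin n, HasDerivAt (fun t : ℝ => (res k + t * w k) ^ 2)
        (2 * res k * w k) 0 := by
      intro k
      have h2 : HasDerivAt (fun t : ℝ => res k + t * w k) (w k) 0 := by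
        simpa using ((hasDerivAt_id (0:ℝ)).mul_const (w k)).const_add (res k)
      have h3 := h2.pow 2
      refine h3.congr_deriv ?_
      norm_num
    have h4 := HasDerivAt.fun_sum (fun k (_ : k ∈ Finset.univ) => h1 k)
    have h5 := h4.const_mul (1/2 : ℝ)
    refine h5.congr_deriv ?_
    rw [Finset.mul_sum]
    exact Finset.sum_congr rfl fun k _ => by ring
  have hqd : HasDerivAt q (2 * r i ^ 2 * (θhat j - θhat i)) 0 := by
    have h1 : HasDerivAt (fun t : ℝ => θhat i - t) (-1) 0 := by
      simpa using (hasDerivAt_id (0:ℝ)).const_sub (θhat i)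
    have h2 : HasDerivAt (fun t : ℝ => θhat j + t) (1) 0 := by
      simpa using (hasDerivAt_id (0:ℝ)).const_add (θhat j)
    have h3 := ((h1.pow 2).sub_const ((θhat i) ^ 2)).const_mul ((r i) ^ 2)
    have h4 := ((h2.pow 2).sub_const ((θhat j) ^ 2)).const_mul ((r i) ^ 2)
    have h5 := (h3.const_add Q).add h4
    refine h5.congr_deriv ?_
    simp only [Nat.cast_ofNat, sub_zero, add_zero, Nat.reduceSub, pow_one]
    ring
  have hroot : HasDerivAt (fun t => Real.sqrt (A ^ 2 + q t))
      ((2 * r i ^ 2 * (θhat j - θhat i)) / (2 * Z)) 0 := by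
    have h1 := (hqd.const_add (A ^ 2)).sqrt (ne_of_gt hAQpos)
    have h2 : Real.sqrt (A ^ 2 + q 0) = Z := by rw [hq0, ← hZ]
    rwa [h2] at h1
  set D : ℝ := (∑ k, res k * w k) + nl * ((2 * r i ^ 2 * (θhat j - θhat i)) / (2 * Z)) with hD
  have hhd : HasDerivAt h D 0 := by
    exact hpart1.add ((hroot.const_add A).const_mul nl)
  have hgd : HasDerivAt g D 0 := by
    apply hhd.congr_of_eventuallyEq
    have hev : ∀ᶠ t in nhds (0:ℝ), |t| < ε := by
      have := eventually_abs_sub_lt (0:ℝ) hεpos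
      simpa using this
    exact hev.mono fun t ht => hgh t ht
  have hD0 : D = 0 := hlocal.hasDerivAt_eq_zero hgd
  -- the key identity
  set C : ℝ := ∑ k, res k * w k with hC
  have hCeq : C = nl * r i ^ 2 * (θhat i - θhat j) / Z := by
    have hZne : Z ≠ 0 := ne_of_gt hZpos
    rw [hD, hC] at hD0
    field_simp at hD0 ⊢
    linarith
  -- Cauchy-Schwarz
  have hCS : |C| ≤ Real.sqrt (∑ k, res k ^ 2) * Real.sqrt (∑ k, w k ^ 2) := by
    have h1 := Finset.sum_mul_sq_le_sq_mul_sq Finset.univ res w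
    calc |C| = Real.sqrt (C ^ 2) := (Real.sqrt_sq_eq_abs C).symm
      _ ≤ Real.sqrt ((∑ k, res k ^ 2) * ∑ k, w k ^ 2) := Real.sqrt_le_sqrt h1
      _ = _ := Real.sqrt_mul (Finset.sum_nonneg fun _ _ => sq_nonneg _) _
  have hw2 : ∑ k, w k ^ 2 = 2 * (1 - ρ) := hstd
  -- residual bounded by y
  have hresy : ∑ k, res k ^ 2 ≤ ∑ k, y k ^ 2 := by
    have h0 := hmin 0
    have heye0 : eye r 0 = 0 := by simp [eye]
    have heyenn : 0 ≤ eye r θhat := by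
      have h1 : |A| ≤ Real.sqrt (A ^ 2 + Q) := by
        rw [← Real.sqrt_sq_eq_abs]
        exact Real.sqrt_le_sqrt (by linarith)
      have h2 := neg_abs_le A
      simp only [eye, ← hA, ← hQdef]
      linarith
    simp only [heye0, mul_zero, add_zero, Pi.zero_apply, mul_zero, Finset.sum_const_zero,
      sub_zero] at h0
    have : (1/2 : ℝ) * ∑ k, res k ^ 2 ≤ (1/2) * ∑ k, y k ^ 2 := by
      simp only [hres]
      nlinarith [mul_nonneg (le_of_lt hnl) heyenn]
    linarith
  have hsqrtres : Real.sqrt (∑ k, res k ^ 2) ≤ Real.sqrt (∑ k, y k ^ 2) :=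
    Real.sqrt_le_sqrt hresy
  -- conclude
  have hC2 : |C| = nl * r i ^ 2 * (|θhat i - θhat j| / Z) := by
    rw [hCeq]
    rw [abs_div, abs_mul, abs_mul, abs_of_pos hnl, abs_of_pos hZpos, abs_of_pos (by positivity : (0:ℝ) < r i ^ 2)]
    ring
  have hbound : nl * r i ^ 2 * (|θhat i - θhat j| / Z)
      ≤ Real.sqrt (∑ k, y k ^ 2) * Real.sqrt (2 * (1 - ρ)) := by
    rw [← hC2]
    calc |C| ≤ Real.sqrt (∑ k, res k ^ 2) * Real.sqrt (∑ k, w k ^ 2) := hCS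
      _ ≤ Real.sqrt (∑ k, y k ^ 2) * Real.sqrt (2 * (1 - ρ)) := by
          rw [hw2]
          exact mul_le_mul_of_nonneg_right hsqrtres (Real.sqrt_nonneg _)
  rw [div_le_div_iff₀ (by positivity) (by positivity : (0:ℝ) < r i ^ 2 * nl)]
  have h1 := mul_le_mul_of_nonneg_right hbound (le_of_lt hZpos)
  have h2 : nl * r i ^ 2 * (|θhat i - θhat j| / Z) * Z = |θhat i - θhat j| * (r i ^ 2 * nl) := by
    field_simp
  rw [h2] at h1
  have h3 : Real.sqrt (∑ k, y k ^ 2) * Real.sqrt (2 * (1 - ρ)) * Z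
      = Real.sqrt (2 * (1 - ρ)) * Real.sqrt (∑ k, y k ^ 2) * Z := by ring
  rw [h3] at h1
  exact h1
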